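/- Let F : ℝ → ℝ be Lipschitz with F(0) = 0 (or just Lipschitz). Then for every measurable f, every x, every α > 0 and ρ > 0, S_α^ρ(F∘f)(x) ≤ Lip(F) · S_α^ρ f(x), where S_α^ρ is the square functional of Definition 5.1. Consequently, whenever c₁‖L^{α/m} h‖_{L^p} ≤ ‖S_α^ρ h‖_{L^p} ≤ c₂‖L^{α/m} h‖_{L^p} holds (characterization of the homogeneous Sobolev norm), one gets ‖L^{α/m} F(f)‖_{L^p} ≲ Lip(F) ‖L^{α/m} f‖_{L^p}. -/
import Mathlib

open MeasureTheory Metric ENNReal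

noncomputable def squareFunctional {X : Type*} [MetricSpace X] [MeasurableSpace X]
    (μ : Measure X) (α ρ : ℝ) (f : X → ℝ) (x : X) : ℝ≥0∞ :=
  (∫⁻ r in Set.Ioi (0 : ℝ),
      (ENNReal.ofReal (r ^ (-α)) *
        ((∫⁻ y in ball x r, ENNReal.ofReal (|f y - f x| ^ ρ) ∂μ) / μ (ball x r)) ^ (1 / ρ)) ^ 2
      / ENNReal.ofReal r) ^ ((1 : ℝ) / 2)

noncomputable def lpNormENN {X : Type*} [MeasurableSpace X]
    (μ : Measure X) (u : X → ℝ≥0∞) (p : ℝ≥0∞) : ℝ≥0∞ :=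
  if p = ∞ then essSup u μ else (∫⁻ x, u x ^ p.toReal ∂μ) ^ (1 / p.toReal)

lemma lpNormENN_mono {X : Type*} [MeasurableSpace X] (μ : Measure X) {u v : X → ℝ≥0∞}
    (h : ∀ x, u x ≤ v x) (p : ℝ≥0∞) : lpNormENN μ u p ≤ lpNormENN μ v p := by
  unfold lpNormENN
  split_ifs
  · exact essSup_mono_ae (Filter.Eventually.of_forall h)
  · refine ENNReal.rpow_le_rpow ?_ (by positivity)
    exact lintegral_mono fun x => ENNReal.rpow_le_rpow (h x) ENNReal.toReal_nonneg

lemma lpNormENN_const_mul_le {X : Type*} [MeasurableSpace X] (μ : Measure X) (u : X → ℝ≥0∞)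
    {c : ℝ≥0∞} (hc : c ≠ ∞) {p : ℝ≥0∞} (hp : p ≠ 0) :
    lpNormENN μ (fun x => c * u x) p ≤ c * lpNormENN μ u p := by
  unfold lpNormENN
  split_ifs with h
  · exact le_of_eq ENNReal.essSup_const_mul
  · have hq : 0 < p.toReal := ENNReal.toReal_pos hp h
    refine le_of_eq ?_
    calc (∫⁻ x, (c * u x) ^ p.toReal ∂μ) ^ (1 / p.toReal)
        = (c ^ p.toReal * ∫⁻ x, u x ^ p.toReal ∂μ) ^ (1 / p.toReal) := by
          rw [← lintegral_const_mul' _ _ (ENNReal.rpow_ne_top_of_nonneg hq.le hc)]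
          simp_rw [ENNReal.mul_rpow_of_nonneg _ _ hq.le]
      _ = c * (∫⁻ x, u x ^ p.toReal ∂μ) ^ (1 / p.toReal) := by
          rw [ENNReal.mul_rpow_of_nonneg _ _ (by positivity), ← ENNReal.rpow_mul,
            mul_one_div_cancel hq.ne', ENNReal.rpow_one]

/-- A Lipschitz nonlinearity is dominated through the square functional:
`S_α^ρ(F∘f)(x) ≤ Lip(F) S_α^ρ f(x)` pointwise; consequently, given the
square-function characterization of the homogeneous Sobolev norm,
`‖L^{α/m} F(f)‖_p ≲ Lip(F) ‖L^{α/m} f‖_p`. -/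
theorem lipschitz_acts_on_sobolev {X : Type*} [MetricSpace X] [MeasurableSpace X]
    (μ : Measure X) (α ρ : ℝ) (hα : 0 < α) (hρ : 0 < ρ)
    (F : ℝ → ℝ) (K : NNReal) (hF : LipschitzWith K F) (f : X → ℝ) :
    (∀ x : X, squareFunctional μ α ρ (F ∘ f) x ≤ (K : ℝ≥0∞) * squareFunctional μ α ρ f x) ∧
    (∀ (Lβ : (X → ℝ) → X → ℝ) (p : ℝ≥0∞) (c₁ c₂ : ℝ) (_ : 0 < c₁) (_ : 0 < c₂),
      (∀ h : X → ℝ,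
        ENNReal.ofReal c₁ * eLpNorm (Lβ h) p μ ≤ lpNormENN μ (squareFunctional μ α ρ h) p ∧
        lpNormENN μ (squareFunctional μ α ρ h) p ≤ ENNReal.ofReal c₂ * eLpNorm (Lβ h) p μ) →
      eLpNorm (Lβ (F ∘ f)) p μ ≤
        (K : ℝ≥0∞) * ENNReal.ofReal (c₂ / c₁) * eLpNorm (Lβ f) p μ) := by
  set C : ℝ≥0∞ := (K : ℝ≥0∞) with hC
  have key : ∀ x, squareFunctional μ α ρ (F ∘ f) x ≤ C * squareFunctional μ α ρ f x := by
    intro x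
    unfold squareFunctional
    have hint : ∀ r : ℝ,
        (ENNReal.ofReal (r ^ (-α)) *
          ((∫⁻ y in ball x r, ENNReal.ofReal (|(F ∘ f) y - (F ∘ f) x| ^ ρ) ∂μ) / μ (ball x r)) ^ (1/ρ)) ^ 2
          / ENNReal.ofReal r
        ≤ C ^ 2 * ((ENNReal.ofReal (r ^ (-α)) *
          ((∫⁻ y in ball x r, ENNReal.ofReal (|f y - f x| ^ ρ) ∂μ) / μ (ball x r)) ^ (1/ρ)) ^ 2
          / ENNReal.ofReal r) := by
      intro r
      have hA : (∫⁻ y in ball x r, ENNReal.ofReal (|(F ∘ f) y - (F ∘ f) x| ^ ρ) ∂μ)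
          ≤ C ^ ρ * ∫⁻ y in ball x r, ENNReal.ofReal (|f y - f x| ^ ρ) ∂μ := by
        rw [← lintegral_const_mul' _ _ (ENNReal.rpow_ne_top_of_nonneg hρ.le ENNReal.coe_ne_top)]
        refine lintegral_mono fun y => ?_
        have h1 : |F (f y) - F (f x)| ≤ (K : ℝ) * |f y - f x| := by
          simpa [Real.dist_eq] using hF.dist_le_mul (f y) (f x)
        have h2 : |F (f y) - F (f x)| ^ ρ ≤ ((K : ℝ) * |f y - f x|) ^ ρ :=
          Real.rpow_le_rpow (abs_nonneg _) h1 hρ.le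
        calc ENNReal.ofReal (|(F ∘ f) y - (F ∘ f) x| ^ ρ)
            ≤ ENNReal.ofReal (((K : ℝ) * |f y - f x|) ^ ρ) := ENNReal.ofReal_le_ofReal h2
          _ = C ^ ρ * ENNReal.ofReal (|f y - f x| ^ ρ) := by
              rw [Real.mul_rpow K.coe_nonneg (abs_nonneg _),
                ENNReal.ofReal_mul (by positivity),
                ← ENNReal.ofReal_rpow_of_nonneg K.coe_nonneg hρ.le, hC,
                ENNReal.ofReal_coe_nnreal]
      have hdiv : (∫⁻ y in ball x r, ENNReal.ofReal (|(F ∘ f) y - (F ∘ f) x| ^ ρ) ∂μ) / μ (ball x r)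
          ≤ C ^ ρ * ((∫⁻ y in ball x r, ENNReal.ofReal (|f y - f x| ^ ρ) ∂μ) / μ (ball x r)) := by
        rw [div_eq_mul_inv, div_eq_mul_inv, ← mul_assoc]
        exact mul_le_mul_left hA _
      have hroot : ((∫⁻ y in ball x r, ENNReal.ofReal (|(F ∘ f) y - (F ∘ f) x| ^ ρ) ∂μ) / μ (ball x r)) ^ (1/ρ)
          ≤ C * ((∫⁻ y in ball x r, ENNReal.ofReal (|f y - f x| ^ ρ) ∂μ) / μ (ball x r)) ^ (1/ρ) := by
        calc _ ≤ (C ^ ρ * ((∫⁻ y in ball x r, ENNReal.ofReal (|f y - f x| ^ ρ) ∂μ) / μ (ball x r))) ^ (1/ρ) :=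
              ENNReal.rpow_le_rpow hdiv (by positivity)
          _ = C * ((∫⁻ y in ball x r, ENNReal.ofReal (|f y - f x| ^ ρ) ∂μ) / μ (ball x r)) ^ (1/ρ) := by
              rw [ENNReal.mul_rpow_of_nonneg _ _ (by positivity), ← ENNReal.rpow_mul,
                mul_one_div_cancel hρ.ne', ENNReal.rpow_one]
      calc (ENNReal.ofReal (r ^ (-α)) *
            ((∫⁻ y in ball x r, ENNReal.ofReal (|(F ∘ f) y - (F ∘ f) x| ^ ρ) ∂μ) / μ (ball x r)) ^ (1/ρ)) ^ 2
            / ENNReal.ofReal r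
          ≤ (ENNReal.ofReal (r ^ (-α)) *
            (C * ((∫⁻ y in ball x r, ENNReal.ofReal (|f y - f x| ^ ρ) ∂μ) / μ (ball x r)) ^ (1/ρ))) ^ 2
            / ENNReal.ofReal r := by gcongr
        _ = C ^ 2 * ((ENNReal.ofReal (r ^ (-α)) *
            ((∫⁻ y in ball x r, ENNReal.ofReal (|f y - f x| ^ ρ) ∂μ) / μ (ball x r)) ^ (1/ρ)) ^ 2
            / ENNReal.ofReal r) := by
            simp only [div_eq_mul_inv]; ring
    calc (∫⁻ r in Set.Ioi (0 : ℝ),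
          (ENNReal.ofReal (r ^ (-α)) *
            ((∫⁻ y in ball x r, ENNReal.ofReal (|(F ∘ f) y - (F ∘ f) x| ^ ρ) ∂μ) / μ (ball x r)) ^ (1/ρ)) ^ 2
          / ENNReal.ofReal r) ^ ((1 : ℝ) / 2)
        ≤ (∫⁻ r in Set.Ioi (0 : ℝ), C ^ 2 * ((ENNReal.ofReal (r ^ (-α)) *
            ((∫⁻ y in ball x r, ENNReal.ofReal (|f y - f x| ^ ρ) ∂μ) / μ (ball x r)) ^ (1/ρ)) ^ 2
          / ENNReal.ofReal r)) ^ ((1 : ℝ) / 2) :=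
          ENNReal.rpow_le_rpow (lintegral_mono fun r => hint r) (by norm_num)
      _ = C * (∫⁻ r in Set.Ioi (0 : ℝ), (ENNReal.ofReal (r ^ (-α)) *
            ((∫⁻ y in ball x r, ENNReal.ofReal (|f y - f x| ^ ρ) ∂μ) / μ (ball x r)) ^ (1/ρ)) ^ 2
          / ENNReal.ofReal r) ^ ((1 : ℝ) / 2) := by
          rw [lintegral_const_mul' _ _ (ENNReal.pow_ne_top ENNReal.coe_ne_top),
            ENNReal.mul_rpow_of_nonneg _ _ (by norm_num : (0:ℝ) ≤ 1/2),
            ← ENNReal.rpow_natCast C 2, ← ENNReal.rpow_mul]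
          norm_num
  refine ⟨key, ?_⟩
  intro Lβ p c₁ c₂ hc₁ hc₂ hyp
  by_cases hp : p = 0
  · simp [hp, eLpNorm_exponent_zero]
  · have h1 := (hyp (F ∘ f)).1
    have h2 := (hyp f).2
    have h3 : lpNormENN μ (squareFunctional μ α ρ (F ∘ f)) p
        ≤ C * lpNormENN μ (squareFunctional μ α ρ f) p :=
      (lpNormENN_mono μ key p).trans (lpNormENN_const_mul_le μ _ ENNReal.coe_ne_top hp)
    have hchain : ENNReal.ofReal c₁ * eLpNorm (Lβ (F ∘ f)) p μ
        ≤ C * (ENNReal.ofReal c₂ * eLpNorm (Lβ f) p μ) :=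
      h1.trans (h3.trans (mul_le_mul_right h2 C))
    have h0 : ENNReal.ofReal c₁ ≠ 0 := by simp [hc₁]
    rw [ENNReal.ofReal_div_of_pos hc₁]
    rw [show C * (ENNReal.ofReal c₂ / ENNReal.ofReal c₁) * eLpNorm (Lβ f) p μ
        = C * (ENNReal.ofReal c₂ * eLpNorm (Lβ f) p μ) / ENNReal.ofReal c₁ by
      rw [div_eq_mul_inv, div_eq_mul_inv]; ring]
    rw [ENNReal.le_div_iff_mul_le (Or.inl h0) (Or.inl ENNReal.ofReal_ne_top)]
    rw [mul_comm]
    exact hchain
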